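/- For the increasing sequence (a_n) enumerating {m ≥ 1 : c_m = 1} (with a_0 = 0), the set of all consecutive differences {a_n − a_{n−1} : n ≥ 1} equals {(4^m − 1)/3 : m ≥ 1}. Moreover a_n − a_{n−1} = 1 iff n ≡ 0, 1, or 2 (mod 4), and for m ≥ 2, a_n − a_{n−1} = (4^m − 1)/3 iff n = 2^{m+1} k + 2^m − 1 for some k ≥ 0. -/

import Mathlib

def myT : ℕ → ℕ
  | 0 => 0
  | m+1 => 4 * myT m + 1

lemma three_myT (m : ℕ) : 3 * myT m + 1 = 4 ^ m := by
  induction m with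
  | zero => simp [myT]
  | succ m ih => simp [myT, pow_succ]; omega

lemma myT_eq (m : ℕ) : (4 ^ m - 1) / 3 = myT m := by
  have := three_myT m
  omega

lemma myT_lt (m : ℕ) : myT m < myT (m+1) := by
  have := three_myT m
  simp [myT]; omega

lemma myT_strictMono : StrictMono myT := strictMono_nat_of_lt_succ myT_lt

lemma myT_ge (m : ℕ) (hm : 2 ≤ m) : 5 ≤ myT m := by
  have : myT 2 ≤ myT m := myT_strictMono.monotone hm
  simpa [myT] using this

/-- binary digits of `n` read in base 4 -/
def myphi (n : ℕ) : ℕ :=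
  if h : n = 0 then 0 else 4 * myphi (n/2) + n % 2
decreasing_by exact Nat.div_lt_self (Nat.pos_of_ne_zero h) one_lt_two

lemma myphi_zero : myphi 0 = 0 := by rw [myphi]; simp

lemma myphi_two_mul (n : ℕ) : myphi (2*n) = 4 * myphi n := by
  rcases Nat.eq_zero_or_pos n with h | h
  · subst h; simp [myphi_zero]
  · rw [myphi]
    have : ¬ (2*n = 0) := by omega
    rw [dif_neg this]
    have h1 : 2*n/2 = n := by omega
    have h2 : 2*n % 2 = 0 := by omega
    rw [h1, h2]
    omega

lemma myphi_two_mul_add_one (n : ℕ) : myphi (2*n+1) = 4 * myphi n + 1 := by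
  rw [myphi]
  have : ¬ (2*n+1 = 0) := by omega
  rw [dif_neg this]
  have h1 : (2*n+1)/2 = n := by omega
  have h2 : (2*n+1) % 2 = 1 := by omega
  rw [h1, h2]

lemma myphi_succ_ge (n : ℕ) : myphi n + 1 ≤ myphi (n+1) := by
  induction n using Nat.strong_induction_on with
  | _ n ih =>
    rcases Nat.even_or_odd n with ⟨t, ht⟩ | ⟨t, ht⟩
    · have e1 : myphi n = 4 * myphi t := by rw [show n = 2*t by omega, myphi_two_mul]
      have e2 : myphi (n+1) = 4 * myphi t + 1 := by
        rw [show n+1 = 2*t+1 by omega, myphi_two_mul_add_one]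
      omega
    · have e1 : myphi n = 4 * myphi t + 1 := by
        rw [show n = 2*t+1 by omega, myphi_two_mul_add_one]
      have e2 : myphi (n+1) = 4 * myphi (t+1) := by
        rw [show n+1 = 2*(t+1) by omega, myphi_two_mul]
      have := ih t (by omega)
      omega

lemma myphi_strictMono : StrictMono myphi :=
  strictMono_nat_of_lt_succ (fun n => by have := myphi_succ_ge n; omega)

lemma myphi_pos (k : ℕ) (hk : 1 ≤ k) : 1 ≤ myphi k := by
  have : myphi 0 < myphi k := myphi_strictMono (by omega)
  rw [myphi_zero] at this; omega

lemma myphi_pow_mul (e s : ℕ) : myphi (2^e * s) = 4^e * myphi s := by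
  induction e with
  | zero => simp
  | succ e ih =>
    rw [show 2^(e+1)*s = 2*(2^e*s) by ring, myphi_two_mul, ih, pow_succ]; ring

lemma myphi_pow (e q : ℕ) : myphi (2^e * q + (2^e - 1)) = 4^e * myphi q + myT e := by
  induction e with
  | zero => simp [myT]
  | succ e ih =>
    have h1 : (1:ℕ) ≤ 2^e := Nat.one_le_two_pow
    have h2 : 2^(e+1) * q + (2^(e+1) - 1) = 2*(2^e*q + (2^e -1)) + 1 := by
      have h3 : (2:ℕ)^(e+1) = 2^e * 2 := pow_succ 2 e
      have h5 : 2^(e+1)*q = 2*(2^e*q) := by rw [h3]; ring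
      omega
    rw [h2, myphi_two_mul_add_one, ih, pow_succ, myT]; ring

/-- membership in range of myphi, recursive characterization -/
lemma mem_range_myphi_iff (x : ℕ) :
    x ∈ Set.range myphi ↔ x % 4 ≤ 1 ∧ x / 4 ∈ Set.range myphi := by
  constructor
  · rintro ⟨k, rfl⟩
    rcases Nat.even_or_odd k with ⟨t, ht⟩ | ⟨t, ht⟩
    · subst ht
      rw [show t+t = 2*t by ring, myphi_two_mul]
      refine ⟨by omega, t, by omega⟩
    · subst ht
      rw [myphi_two_mul_add_one]
      refine ⟨by omega, t, by omega⟩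
  · rintro ⟨h1, j, hj⟩
    refine ⟨2*j + x % 4, ?_⟩
    interval_cases h : x % 4
    · rw [Nat.add_zero, myphi_two_mul, hj]; omega
    · rw [myphi_two_mul_add_one, hj]; omega

def myP (m : ℕ) : Prop := 1 ≤ m ∧ (m+1)/2 ∈ Set.range myphi

noncomputable instance myP.dec : DecidablePred myP := fun _ => Classical.dec _

lemma mem4 (u r : ℕ) (hr : r ≤ 1) : 4*u + r ∈ Set.range myphi ↔ u ∈ Set.range myphi := by
  rw [mem_range_myphi_iff]
  constructor
  · rintro ⟨-, h⟩; rwa [show (4*u+r)/4 = u by omega] at h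
  · intro h; exact ⟨by omega, by rwa [show (4*u+r)/4 = u by omega]⟩

lemma notmem4 (u r : ℕ) (h2 : 2 ≤ r) (h3 : r ≤ 3) : 4*u+r ∉ Set.range myphi := by
  rw [mem_range_myphi_iff]; rintro ⟨h,-⟩; omega

/-- key step: myphi-range shift at odd numbers -/
lemma range_shift (n : ℕ) : (2*n+1 ∈ Set.range myphi) ↔ (2*n ∈ Set.range myphi) := by
  rcases Nat.even_or_odd n with ⟨u, hu⟩ | ⟨u, hu⟩
  · rw [show 2*n+1 = 4*u+1 by omega, show 2*n = 4*u+0 by omega,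
      mem4 u 1 (by norm_num), mem4 u 0 (by norm_num)]
  · have g1 := notmem4 u 3 (by norm_num) (by norm_num)
    have g2 := notmem4 u 2 (by norm_num) (by norm_num)
    rw [show 2*n+1 = 4*u+3 by omega, show 2*n = 4*u+2 by omega]
    simp [g1, g2]
lemma myP_iff (m : ℕ) : myP m ↔ (1 ≤ m ∧ (m+1)/2 ∈ Set.range myphi) := Iff.rfl

lemma myphi_one : myphi 1 = 1 := by
  have := myphi_two_mul_add_one 0
  simpa [myphi_zero] using this

lemma indicator_congr (x y : ℕ) (h : myP x ↔ myP y) :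
    (if myP x then (1:ZMod 2) else 0) = (if myP y then 1 else 0) := by
  by_cases hx : myP x
  · rw [if_pos hx, if_pos (h.mp hx)]
  · rw [if_neg hx, if_neg (fun hy => hx (h.mpr hy))]

lemma c_eq (c : ℕ → ZMod 2) (hc0 : c 0 = 0) (hc1 : c 1 = 1) (hc2 : c 2 = 1) (hc3 : c 3 = 0)
    (h40 : ∀ n : ℕ, 1 ≤ n → c (4 * n) = c (4 * n - 1))
    (h41 : ∀ n : ℕ, 1 ≤ n → c (4 * n + 1) = c (4 * n - 1))
    (h42 : ∀ n : ℕ, 1 ≤ n → c (4 * n + 2) = c (4 * n - 1))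
    (h43 : ∀ n : ℕ, 1 ≤ n → c (4 * n + 3) = c (4 * n - 1) + c n) :
    ∀ m, c m = if myP m then 1 else 0 := by
  intro m
  induction m using Nat.strong_induction_on with
  | _ m ih =>
    by_cases hm : m < 4
    · interval_cases m
      · rw [hc0, if_neg (fun h => by exact absurd h.1 (by omega))]
      · rw [hc1, if_pos ⟨le_refl 1, by rw [show (1+1)/2 = 1 by norm_num]; exact ⟨1, myphi_one⟩⟩]
      · rw [hc2, if_pos ⟨by omega, by rw [show (2+1)/2 = 1 by norm_num]; exact ⟨1, myphi_one⟩⟩]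
      · rw [hc3, if_neg ?_]
        rintro ⟨-, h⟩
        rw [show (3+1)/2 = 2 by norm_num] at h
        exact notmem4 0 2 (by norm_num) (by norm_num) (by simpa using h)
    · push_neg at hm
      set n := m / 4 with hn
      have hn1 : 1 ≤ n := by omega
      have hprev : c (4*n - 1) = if myP (4*n-1) then 1 else 0 := ih (4*n-1) (by omega)
      have hP41 : (4*n-1+1)/2 = 2*n := by omega
      have r4 : m % 4 = 0 ∨ m % 4 = 1 ∨ m % 4 = 2 ∨ m % 4 = 3 := by omega
      rcases r4 with hr | hr | hr | hr
      · have hm4 : m = 4*n := by omega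
        rw [hm4, h40 n hn1, hprev]
        apply indicator_congr
        rw [myP_iff, myP_iff, hP41, show (4*n+1)/2 = 2*n by omega]
        constructor <;> (rintro ⟨-, h⟩; exact ⟨by omega, h⟩)
      · have hm4 : m = 4*n+1 := by omega
        rw [hm4, h41 n hn1, hprev]
        apply indicator_congr
        rw [myP_iff, myP_iff, hP41, show (4*n+1+1)/2 = 2*n+1 by omega, range_shift]
        constructor <;> (rintro ⟨-, h⟩; exact ⟨by omega, h⟩)
      · have hm4 : m = 4*n+2 := by omega
        rw [hm4, h42 n hn1, hprev]
        apply indicator_congr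
        rw [myP_iff, myP_iff, hP41, show (4*n+2+1)/2 = 2*n+1 by omega, range_shift]
        constructor <;> (rintro ⟨-, h⟩; exact ⟨by omega, h⟩)
      · have hm4 : m = 4*n+3 := by omega
        have hcn : c n = if myP n then 1 else 0 := ih n (by omega)
        rw [hm4, h43 n hn1, hprev, hcn]
        have e1 : (4*n+3+1)/2 = 2*n+2 := by omega
        rcases Nat.even_or_odd n with ⟨u, hu⟩ | ⟨u, hu⟩
        · -- n = 2u, u ≥ 1 : LHS false; RHS = [u] + [u] = 0
          have hu1 : 1 ≤ u := by omega
          have l1 : ¬ myP (4*n+3) := by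
            rintro ⟨-, h⟩
            rw [e1, show 2*n+2 = 4*u+2 by omega] at h
            exact notmem4 u 2 (by norm_num) (by norm_num) h
          have l2 : myP (4*n-1) ↔ u ∈ Set.range myphi := by
            rw [myP_iff, hP41, show 2*n = 4*u+0 by omega, mem4 u 0 (by norm_num)]
            constructor
            · rintro ⟨-, h⟩; exact h
            · intro h; exact ⟨by omega, h⟩
          have l3 : myP n ↔ u ∈ Set.range myphi := by
            rw [myP_iff, show (n+1)/2 = u by omega]
            constructor
            · rintro ⟨-, h⟩; exact h
            · intro h; exact ⟨by omega, h⟩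
          rw [if_neg l1]
          by_cases hu' : u ∈ Set.range myphi
          · rw [if_pos (l2.mpr hu'), if_pos (l3.mpr hu')]; decide
          · rw [if_neg (fun h => hu' (l2.mp h)), if_neg (fun h => hu' (l3.mp h))]; decide
        · -- n = 2u+1 : LHS = [u+1]; c(4n-1) term false; RHS = 0 + [u+1]
          have l2 : ¬ myP (4*n-1) := by
            rintro ⟨-, h⟩
            rw [hP41, show 2*n = 4*u+2 by omega] at h
            exact notmem4 u 2 (by norm_num) (by norm_num) h
          have l1 : myP (4*n+3) ↔ (u+1) ∈ Set.range myphi := by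
            rw [myP_iff, e1, show 2*n+2 = 4*(u+1)+0 by omega, mem4 (u+1) 0 (by norm_num)]
            constructor
            · rintro ⟨-, h⟩; exact h
            · intro h; exact ⟨by omega, h⟩
          have l3 : myP n ↔ (u+1) ∈ Set.range myphi := by
            rw [myP_iff, show (n+1)/2 = u+1 by omega]
            constructor
            · rintro ⟨-, h⟩; exact h
            · intro h; exact ⟨by omega, h⟩
          rw [if_neg l2]
          by_cases hu' : (u+1) ∈ Set.range myphi
          · rw [if_pos (l1.mpr hu'), if_pos (l3.mpr hu')]; decide
          · rw [if_neg (fun h => hu' (l1.mp h)), if_neg (fun h => hu' (l3.mp h))]; decide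
/-- the enumeration function -/
def myA (n : ℕ) : ℕ := if n % 2 = 0 then 2 * myphi (n/2) else 2 * myphi (n/2 + 1) - 1

lemma myA_even (t : ℕ) : myA (2*t) = 2 * myphi t := by
  unfold myA
  rw [if_pos (by omega), show 2*t/2 = t by omega]

lemma myA_odd (t : ℕ) : myA (2*t+1) = 2 * myphi (t+1) - 1 := by
  unfold myA
  rw [if_neg (by omega), show (2*t+1)/2 = t by omega]

lemma myA_zero : myA 0 = 0 := by
  have := myA_even 0; simpa [myphi_zero] using this

lemma myA_succ_lt (n : ℕ) : myA n < myA (n+1) := by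
  rcases Nat.even_or_odd n with ⟨t, ht⟩ | ⟨t, ht⟩
  · have e1 : myA n = 2 * myphi t := by rw [show n = 2*t by omega, myA_even]
    have e2 : myA (n+1) = 2 * myphi (t+1) - 1 := by rw [show n+1 = 2*t+1 by omega, myA_odd]
    have := myphi_succ_ge t
    omega
  · have e1 : myA n = 2 * myphi (t+1) - 1 := by rw [show n = 2*t+1 by omega, myA_odd]
    have e2 : myA (n+1) = 2 * myphi (t+1) := by rw [show n+1 = 2*(t+1) by omega, myA_even]
    have := myphi_pos (t+1) (by omega)
    omega

lemma myA_strictMono : StrictMono myA := strictMono_nat_of_lt_succ myA_succ_lt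

/-- the elements of myP are exactly the myA n for n ≥ 1 -/
lemma myP_iff_mem (m : ℕ) : myP m ↔ ∃ j, m = myA (j+1) := by
  constructor
  · rintro ⟨h1, k, hk⟩
    have hk1 : 1 ≤ k := by
      by_contra h
      have : k = 0 := by omega
      rw [this, myphi_zero] at hk
      omega
    have hphik : 1 ≤ myphi k := myphi_pos k hk1
    rcases Nat.even_or_odd m with ⟨t, ht⟩ | ⟨t, ht⟩
    · -- m even: (m+1)/2 = t, m = 2t = 2 phi k
      have : t = myphi k := by omega
      refine ⟨2*k - 1, ?_⟩
      rw [show 2*k-1+1 = 2*k by omega, myA_even, ← this]; omega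
    · -- m odd: (m+1)/2 = t+1, m = 2(t+1)-1 = 2 phi k - 1
      have : t + 1 = myphi k := by omega
      refine ⟨2*(k-1), ?_⟩
      rw [show 2*(k-1)+1 = 2*(k-1)+1 by rfl, myA_odd, show k-1+1 = k by omega, ← this]
      omega
  · rintro ⟨j, rfl⟩
    rcases Nat.even_or_odd (j+1) with ⟨t, ht⟩ | ⟨t, ht⟩
    · have ht1 : 1 ≤ t := by omega
      have e : myA (j+1) = 2 * myphi t := by rw [show j+1 = 2*t by omega, myA_even]
      have hphit : 1 ≤ myphi t := myphi_pos t ht1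
      exact ⟨by omega, t, by omega⟩
    · have e : myA (j+1) = 2 * myphi (t+1) - 1 := by rw [show j+1 = 2*t+1 by omega, myA_odd]
      have hphit : 1 ≤ myphi (t+1) := myphi_pos (t+1) (by omega)
      exact ⟨by omega, t+1, by omega⟩
lemma a_eq_myA (c : ℕ → ZMod 2)
    (hce : ∀ m, c m = if myP m then 1 else 0)
    (a : ℕ → ℕ) (ha0 : a 0 = 0)
    (ha : ∀ n : ℕ, a (n + 1) = Nat.nth (fun m => 1 ≤ m ∧ c m = 1) n) :
    ∀ n, a n = myA n := by
  classical
  set p : ℕ → Prop := fun m => 1 ≤ m ∧ c m = 1 with hp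
  have hpiff : ∀ m, p m ↔ ∃ j, m = myA (j+1) := by
    intro m
    rw [← myP_iff_mem]
    constructor
    · rintro ⟨h1, h2⟩
      rw [hce] at h2
      by_contra h
      rw [if_neg h] at h2
      exact one_ne_zero h2.symm
    · intro h
      refine ⟨h.1, ?_⟩
      rw [hce, if_pos h]
  have hcount : ∀ n, Nat.count p (myA (n+1)) = n := by
    intro n
    rw [Nat.count_eq_card_filter_range]
    have : Finset.filter p (Finset.range (myA (n+1))) =
        Finset.image (fun j => myA (j+1)) (Finset.range n) := by
      ext x
      simp only [Finset.mem_filter, Finset.mem_range, Finset.mem_image]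
      constructor
      · rintro ⟨hx, hpx⟩
        obtain ⟨j, rfl⟩ := (hpiff _).mp hpx
        have : j + 1 < n + 1 := myA_strictMono.lt_iff_lt.mp hx
        exact ⟨j, by omega, rfl⟩
      · rintro ⟨j, hj, rfl⟩
        exact ⟨myA_strictMono (by omega), (hpiff _).mpr ⟨j, rfl⟩⟩
    rw [this, Finset.card_image_of_injective _ (fun i j h => by
      have := myA_strictMono.injective h; omega), Finset.card_range]
  intro n
  cases n with
  | zero => rw [ha0, myA_zero]
  | succ n =>
    rw [ha n]
    have h1 : p (myA (n+1)) := (hpiff _).mpr ⟨n, rfl⟩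
    have := Nat.nth_count h1
    rw [hcount n] at this
    exact this
lemma myA_diff_even (t : ℕ) : myA (2*t+2) = myA (2*t+1) + 1 := by
  have e1 : myA (2*t+2) = 2 * myphi (t+1) := by rw [show 2*t+2 = 2*(t+1) by ring, myA_even]
  have e2 := myA_odd t
  have := myphi_pos (t+1) (by omega)
  omega

lemma myA_diff_odd (e k : ℕ) :
    myA (2*(2^e*(2*k)+(2^e-1))+1) = myA (2*(2^e*(2*k)+(2^e-1))) + myT (e+1) := by
  have h1 : (1:ℕ) ≤ 2^e := Nat.one_le_two_pow
  set t := 2^e*(2*k)+(2^e-1) with ht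
  have e2 : myA (2*t) = 2 * (4^e * myphi (2*k) + myT e) := by
    rw [myA_even, ht, myphi_pow]
  have e3 : t + 1 = 2^e*(2*k+1) := by
    have : 2^e*(2*k+1) = 2^e*(2*k) + 2^e := by ring
    omega
  have e4 : myA (2*t+1) = 2 * (4^e * myphi (2*k+1)) - 1 := by
    rw [myA_odd, e3, myphi_pow_mul]
  have e5 : myphi (2*k) = 4 * myphi k := myphi_two_mul k
  have e6 : myphi (2*k+1) = 4 * myphi k + 1 := myphi_two_mul_add_one k
  have e7 : 4^e * myphi (2*k+1) = 4*(4^e * myphi k) + 4^e := by rw [e6]; ring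
  have e8 : 4^e * myphi (2*k) = 4*(4^e * myphi k) := by rw [e5]; ring
  have e9 := three_myT e
  have e10 : myT (e+1) = 4 * myT e + 1 := rfl
  have h4 : (1:ℕ) ≤ 4^e := Nat.one_le_pow _ _ (by norm_num)
  omega

lemma odd_decomp (t : ℕ) : ∃ e k, t = 2^e*(2*k) + (2^e - 1) := by
  induction t using Nat.strong_induction_on with
  | _ t ih =>
    rcases Nat.even_or_odd t with ⟨u, hu⟩ | ⟨u, hu⟩
    · exact ⟨0, u, by simp; omega⟩
    · obtain ⟨e, k, hek⟩ := ih u (by omega)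
      refine ⟨e+1, k, ?_⟩
      have h1 : (1:ℕ) ≤ 2^e := Nat.one_le_two_pow
      have h2 : (2:ℕ)^(e+1) = 2 * 2^e := by rw [pow_succ]; ring
      have h3 : 2^(e+1)*(2*k) = 2*(2^e*(2*k)) := by rw [h2]; ring
      omega

lemma form_eq (m k : ℕ) (hm : 1 ≤ m) :
    2^(m+1)*k + 2^m - 1 = 2*(2^(m-1)*(2*k) + (2^(m-1) - 1)) + 1 := by
  obtain ⟨j, rfl⟩ : ∃ j, m = j + 1 := ⟨m-1, by omega⟩
  simp only [Nat.add_sub_cancel]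
  have h1 : (1:ℕ) ≤ 2^j := Nat.one_le_two_pow
  have h2 : (2:ℕ)^(j+1+1) = 4 * 2^j := by rw [pow_succ, pow_succ]; ring
  have h3 : (2:ℕ)^(j+1) = 2 * 2^j := by rw [pow_succ]; ring
  have h4 : 2^(j+1+1)*k = 4*(2^j*k) := by rw [h2]; ring
  have h5 : 2^j*(2*k) = 2*(2^j*k) := by ring
  omega

/-- Consecutive differences of the increasing enumeration `a` of
`{m ≥ 1 : c_m = 1}` (with `a₀ = 0`): the set of differences is
`{(4^m − 1)/3 : m ≥ 1}`; the difference is `1` iff `n ≡ 0,1,2 (mod 4)`; and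
for `m ≥ 2` it equals `(4^m − 1)/3` iff `n = 2^{m+1}k + 2^m − 1`. -/
theorem a_differences (c : ℕ → ZMod 2) (hc0 : c 0 = 0) (hc1 : c 1 = 1) (hc2 : c 2 = 1) (hc3 : c 3 = 0)
    (h40 : ∀ n : ℕ, 1 ≤ n → c (4 * n) = c (4 * n - 1))
    (h41 : ∀ n : ℕ, 1 ≤ n → c (4 * n + 1) = c (4 * n - 1))
    (h42 : ∀ n : ℕ, 1 ≤ n → c (4 * n + 2) = c (4 * n - 1))
    (h43 : ∀ n : ℕ, 1 ≤ n → c (4 * n + 3) = c (4 * n - 1) + c n)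
    (a : ℕ → ℕ) (ha0 : a 0 = 0)
    (ha : ∀ n : ℕ, a (n + 1) = Nat.nth (fun m => 1 ≤ m ∧ c m = 1) n) :
    ({x : ℕ | ∃ n : ℕ, 1 ≤ n ∧ x = a n - a (n - 1)} =
      {x : ℕ | ∃ m : ℕ, 1 ≤ m ∧ x = (4 ^ m - 1) / 3}) ∧
    (∀ n : ℕ, 1 ≤ n →
      (a n - a (n - 1) = 1 ↔ n % 4 = 0 ∨ n % 4 = 1 ∨ n % 4 = 2)) ∧
    (∀ m : ℕ, 2 ≤ m → ∀ n : ℕ, 1 ≤ n →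
      (a n - a (n - 1) = (4 ^ m - 1) / 3 ↔
        ∃ k : ℕ, n = 2 ^ (m + 1) * k + 2 ^ m - 1)) := by
  have hce := c_eq c hc0 hc1 hc2 hc3 h40 h41 h42 h43
  have hA := a_eq_myA c hce a ha0 ha
  -- diff lemmas in terms of a
  have key_even : ∀ n, n % 2 = 0 → 1 ≤ n → a n - a (n-1) = 1 := by
    intro n hn2 hn1
    obtain ⟨t, ht⟩ : ∃ t, n = 2*t+2 := ⟨(n-2)/2, by omega⟩
    rw [hA, hA, ht, show 2*t+2-1 = 2*t+1 by omega, myA_diff_even]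
    omega
  have key_odd : ∀ e k n, n = 2*(2^e*(2*k)+(2^e-1))+1 → a n - a (n-1) = myT (e+1) := by
    intro e k n hn
    rw [hA, hA, hn, Nat.add_sub_cancel, myA_diff_odd]
    omega
  -- decomposition of odd n
  have decomp : ∀ n, n % 2 = 1 → ∃ e k, n = 2*(2^e*(2*k)+(2^e-1))+1 := by
    intro n hn
    obtain ⟨e, k, hek⟩ := odd_decomp ((n-1)/2)
    exact ⟨e, k, by omega⟩
  -- parity of the decomposition form
  have form_mod : ∀ e k, (2*(2^e*(2*k)+(2^e-1))+1) % 4 = if e = 0 then 1 else 3 := by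
    intro e k
    cases e with
    | zero => simp; omega
    | succ j =>
      have h1 : (1:ℕ) ≤ 2^j := Nat.one_le_two_pow
      have h2 : (2:ℕ)^(j+1) = 2 * 2^j := by rw [pow_succ]; ring
      have h3 : 2^(j+1)*(2*k) = 4*(2^j*k) := by rw [h2]; ring
      simp only [if_neg (Nat.succ_ne_zero j)]
      omega
  refine ⟨?_, ?_, ?_⟩
  · -- set equality
    ext x
    simp only [Set.mem_setOf_eq]
    constructor
    · rintro ⟨n, hn1, hx⟩
      rcases Nat.even_or_odd n with ⟨t, ht⟩ | ⟨t, ht⟩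
      · refine ⟨1, le_refl 1, ?_⟩
        rw [myT_eq, hx, key_even n (by omega) hn1]; rfl
      · obtain ⟨e, k, hek⟩ := decomp n (by omega)
        refine ⟨e+1, by omega, ?_⟩
        rw [myT_eq, hx, key_odd e k n hek]
    · rintro ⟨m, hm1, hx⟩
      refine ⟨2^(m+1)*0 + 2^m - 1, ?_, ?_⟩
      · have : (2:ℕ) ≤ 2^m := by
          calc (2:ℕ) = 2^1 := rfl
          _ ≤ 2^m := Nat.pow_le_pow_right (by norm_num) hm1
        omega
      · rw [hx, myT_eq, key_odd (m-1) 0 _ (form_eq m 0 hm1), show m-1+1 = m by omega]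
  · -- diff = 1 iff n % 4 ∈ {0,1,2}
    intro n hn1
    constructor
    · intro hd
      by_contra hcon
      push_neg at hcon
      have hn4 : n % 4 = 3 := by omega
      obtain ⟨e, k, hek⟩ := decomp n (by omega)
      have he : ¬ (e = 0) := by
        intro he0
        have := form_mod e k
        rw [if_pos he0] at this
        rw [← hek] at this
        omega
      have h5 : 5 ≤ myT (e+1) := myT_ge (e+1) (by omega)
      rw [key_odd e k n hek] at hd
      omega
    · intro hcase
      rcases hcase with h | h | h
      · exact key_even n (by omega) hn1
      · -- n % 4 = 1 : n = 4s+1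
        obtain ⟨e, k, hek⟩ := decomp n (by omega)
        have he : e = 0 := by
          by_contra he0
          have := form_mod e k
          rw [if_neg he0, ← hek] at this
          omega
        rw [key_odd e k n hek, he]
        rfl
      · exact key_even n (by omega) hn1
  · -- diff = (4^m-1)/3 iff n = 2^(m+1) k + 2^m - 1
    intro m hm2 n hn1
    have h5 : 5 ≤ myT m := myT_ge m hm2
    rw [myT_eq]
    constructor
    · intro hd
      rcases Nat.even_or_odd n with ⟨t, ht⟩ | ⟨t, ht⟩
      · rw [key_even n (by omega) hn1] at hd
        omega
      · obtain ⟨e, k, hek⟩ := decomp n (by omega)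
        rw [key_odd e k n hek] at hd
        have hem : e + 1 = m := myT_strictMono.injective hd
        refine ⟨k, ?_⟩
        rw [form_eq m k (by omega), show m - 1 = e by omega]
        exact hek
    · rintro ⟨k, rfl⟩
      rw [key_odd (m-1) k _ (form_eq m k (by omega)), show m-1+1 = m by omega]
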